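/- Let G be a d × d symmetric positive definite real matrix and B a skew-symmetric d × d real matrix. Then the generalized metric H = [[G − B·G⁻¹·B, B·G⁻¹], [−G⁻¹·B, G⁻¹]] is positive definite. -/

import Mathlib

open Matrix

/-- Auxiliary: a positive semidefinite matrix with invertible determinant is
positive definite. -/
lemma posDef_of_posSemidef_isUnit_det {n : Type*} [Fintype n] [DecidableEq n]
    {M : Matrix n n ℝ} (hM : M.PosSemidef) (hdet : IsUnit M.det) : M.PosDef := by
  refine PosDef.of_dotProduct_mulVec_pos hM.1 fun x hx => ?_
  rcases lt_or_eq_of_le (hM.dotProduct_mulVec_nonneg x) with h | h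
  · exact h
  · exfalso
    have h0 : M *ᵥ x = 0 := (hM.dotProduct_mulVec_zero_iff x).mp h.symm
    have : x = 0 := by
      have := congrArg (fun v => M⁻¹ *ᵥ v) h0
      simpa [Matrix.mulVec_mulVec, Matrix.nonsing_inv_mul M hdet] using this
    exact hx this

/-- The T-fold generalized metric
`H = [[G − B G⁻¹ B, B G⁻¹], [−G⁻¹ B, G⁻¹]]` built from a symmetric positive
definite `G` and a skew-symmetric `B` is positive definite. -/
theorem stmt_7 (d : ℕ) (G B : Matrix (Fin d) (Fin d) ℝ)
    (hG : G.PosDef) (hB : Bᵀ = -B) :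
    (Matrix.fromBlocks (G - B * G⁻¹ * B) (B * G⁻¹) (-(G⁻¹ * B)) G⁻¹).PosDef := by
  have hGdet : IsUnit G.det := isUnit_iff_isUnit_det G |>.mp hG.isUnit
  have hGinv : (G⁻¹).PosDef := hG.inv
  have hGinvdet : IsUnit (G⁻¹).det := isUnit_iff_isUnit_det _ |>.mp hGinv.isUnit
  haveI : Invertible (G⁻¹) := Matrix.invertibleOfIsUnitDet _ hGinvdet
  have hGsymm : Gᵀ = G := hG.isHermitian
  have hGinvsymm : (G⁻¹)ᵀ = G⁻¹ := (Matrix.transpose_nonsing_inv G).trans (by rw [hGsymm])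
  have hCT : (-(G⁻¹ * B)) = (B * G⁻¹)ᴴ := by
    simp [Matrix.transpose_mul, hB, hGinvsymm]
  have hGG : (G⁻¹)⁻¹ = G := Matrix.nonsing_inv_nonsing_inv G hGdet
  -- Schur complement: A - B D⁻¹ Bᴴ = G
  have hschur : (G - B * G⁻¹ * B) - (B * G⁻¹) * G * (B * G⁻¹)ᴴ = G := by
    rw [← hCT]
    have h1 : B * G⁻¹ * G = B := by
      rw [Matrix.mul_assoc, Matrix.nonsing_inv_mul G hGdet, Matrix.mul_one]
    rw [h1, Matrix.mul_neg, sub_neg_eq_add, ← Matrix.mul_assoc]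
    abel
  have hpsd : (Matrix.fromBlocks (G - B * G⁻¹ * B) (B * G⁻¹) (-(G⁻¹ * B)) G⁻¹).PosSemidef := by
    rw [hCT]
    rw [Matrix.PosDef.fromBlocks₂₂ _ _ hGinv, hGG, hschur]
    exact hG.posSemidef
  apply posDef_of_posSemidef_isUnit_det hpsd
  rw [hCT, Matrix.det_fromBlocks₂₂]
  rw [show ⅟(G⁻¹) = G from by rw [Matrix.invOf_eq_nonsing_inv, hGG], hschur]
  exact hGinvdet.mul hGdet
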